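/- For each t ∈ ℤ≥0, ⟨[(P^(k))^t]_0, d^(k)⟩ ≤ ⟨[(P^(k+1))^t]_0, d^(k+1)⟩ and ⟨[(P^(k))^t]_0, 𝟏_{2k-1}⟩ ≤ ⟨[(P^(k+1))^t]_0, 𝟏_{2k+1}⟩, with strict inequality for t large enough. Here [A]_0 is row 0 of A. -/

import Mathlib

/-- Restriction of the Toeplitz matrix `P(i,j) = p(|i-j|)` to
`S^(k) = {-(k-1), …, k-1}`, indexed by `Fin (2k-1)` (index `i` corresponds to
the integer `i - (k-1)`). -/
def Prestrict (p : ℕ → ℝ) (k : ℕ) : Matrix (Fin (2 * k - 1)) (Fin (2 * k - 1)) ℝ :=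
  fun i j => p ((i.val : ℤ) - (j.val : ℤ)).natAbs

/-- Row 0 (the center row) of `(P^(k))^t` paired with the vector
`(d(e))_{e ∈ S^(k)}`. -/
noncomputable def rowPair (p : ℕ → ℝ) (d : ℤ → ℝ) (k t : ℕ) (hk : 1 ≤ k) : ℝ :=
  ∑ j : Fin (2 * k - 1),
    ((Prestrict p k) ^ t) ⟨k - 1, by omega⟩ j * d ((j.val : ℤ) - ((k : ℤ) - 1))

namespace RowPairAux

variable {p : ℕ → ℝ}

lemma pow_nonneg (hp0 : ∀ n, 0 ≤ p n) (k t : ℕ) (i j : Fin (2 * k - 1)) :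
    0 ≤ ((Prestrict p k) ^ t) i j := by
  induction t generalizing i j with
  | zero => rw [pow_zero, Matrix.one_apply]; split <;> norm_num
  | succ t ih =>
      rw [pow_succ, Matrix.mul_apply]
      exact Finset.sum_nonneg fun m _ => mul_nonneg (ih i m) (hp0 _)

def emb (k : ℕ) : Fin (2 * k - 1) → Fin (2 * (k + 1) - 1) :=
  fun i => ⟨i.val + 1, by omega⟩

lemma emb_inj (k : ℕ) : Function.Injective (emb k) := by
  intro a b h
  have := congrArg Fin.val h
  simp [emb] at this
  exact Fin.ext this

lemma prestrict_emb (k : ℕ) (i j : Fin (2 * k - 1)) :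
    Prestrict p (k + 1) (emb k i) (emb k j) = Prestrict p k i j := by
  simp only [Prestrict, emb]
  congr 1
  omega

lemma mono_pow (hp0 : ∀ n, 0 ≤ p n) (k t : ℕ) (i j : Fin (2 * k - 1)) :
    ((Prestrict p k) ^ t) i j ≤ ((Prestrict p (k + 1)) ^ t) (emb k i) (emb k j) := by
  induction t generalizing i j with
  | zero =>
      rw [pow_zero, pow_zero, Matrix.one_apply, Matrix.one_apply]
      by_cases h : i = j
      · simp [h]
      · have h2 : emb k i ≠ emb k j := fun hc => h (emb_inj k hc)
        simp [h, h2]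
  | succ t ih =>
      rw [pow_succ, pow_succ, Matrix.mul_apply, Matrix.mul_apply]
      calc ∑ m, ((Prestrict p k) ^ t) i m * Prestrict p k m j
          ≤ ∑ m, ((Prestrict p (k+1)) ^ t) (emb k i) (emb k m) *
              Prestrict p (k+1) (emb k m) (emb k j) := by
            refine Finset.sum_le_sum fun m _ => ?_
            rw [prestrict_emb]
            exact mul_le_mul_of_nonneg_right (ih i m) (hp0 _)
        _ = ∑ m' ∈ Finset.univ.image (emb k),
              ((Prestrict p (k+1)) ^ t) (emb k i) m' * Prestrict p (k+1) m' (emb k j) := by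
            rw [Finset.sum_image (fun a _ b _ h => emb_inj k h)]
        _ ≤ ∑ m', ((Prestrict p (k+1)) ^ t) (emb k i) m' * Prestrict p (k+1) m' (emb k j) := by
            refine Finset.sum_le_sum_of_subset_of_nonneg (Finset.subset_univ _) fun m' _ _ =>
              mul_nonneg (pow_nonneg hp0 _ _ _ _) (hp0 _)

lemma pow_pos (hp0 : ∀ n, 0 ≤ p n) (hpdec : ∀ n : ℕ, p (n + 1) ≤ p n) (hp1 : 0 < p 1)
    (k : ℕ) : ∀ t (i j : Fin (2 * k - 1)), ((i.val : ℤ) - j.val).natAbs ≤ t →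
    0 < ((Prestrict p k) ^ t) i j := by
  have hp0pos : 0 < p 0 := lt_of_lt_of_le hp1 (hpdec 0)
  intro t
  induction t with
  | zero =>
      intro i j h
      have : i = j := Fin.ext (by omega)
      subst this
      simp [Matrix.one_apply]
  | succ t ih =>
      intro i j h
      have key : ∀ m : Fin (2 * k - 1), ((i.val : ℤ) - m.val).natAbs ≤ t →
          0 < Prestrict p k m j → 0 < ((Prestrict p k) ^ (t + 1)) i j := by
        intro m hm hmj
        rw [pow_succ, Matrix.mul_apply]
        exact lt_of_lt_of_le (mul_pos (ih i m hm) hmj)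
          (Finset.single_le_sum
            (f := fun m' => ((Prestrict p k) ^ t) i m' * Prestrict p k m' j)
            (fun m' _ => mul_nonneg (pow_nonneg hp0 _ _ _ _) (hp0 _))
            (Finset.mem_univ m))
      rcases lt_trichotomy i.val j.val with hc | hc | hc
      · refine key ⟨j.val - 1, by omega⟩ (by simp; omega) ?_
        have : (((j.val - 1 : ℕ) : ℤ) - j.val).natAbs = 1 := by omega
        simp only [Prestrict, this]; exact hp1
      · refine key j (by omega) ?_
        have : ((j.val : ℤ) - j.val).natAbs = 0 := by omega
        simp only [Prestrict, this]; exact hp0pos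
      · refine key ⟨j.val + 1, by omega⟩ (by simp; omega) ?_
        have : (((j.val + 1 : ℕ) : ℤ) - j.val).natAbs = 1 := by omega
        simp only [Prestrict, this]; exact hp1

lemma rowPair_key (w : ℤ → ℝ) (k t : ℕ) (hk : 1 ≤ k)
    (hp0 : ∀ n, 0 ≤ p n) (hw : ∀ e, 0 ≤ w e) :
    rowPair p w k t hk +
      ((Prestrict p (k + 1)) ^ t) ⟨(k + 1) - 1, by omega⟩ ⟨2 * k, by omega⟩ * w k ≤
    rowPair p w (k + 1) t (Nat.le_add_left 1 k) := by
  unfold rowPair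
  set c : Fin (2 * k - 1) := ⟨k - 1, by omega⟩ with hc
  have hec : emb k c = ⟨(k + 1) - 1, by omega⟩ := by
    apply Fin.ext
    show (k - 1) + 1 = (k + 1) - 1
    omega
  set f : Fin (2 * (k + 1) - 1) → ℝ :=
    fun j' => ((Prestrict p (k + 1)) ^ t) ⟨(k + 1) - 1, by omega⟩ j' *
      w ((j'.val : ℤ) - ((((k + 1 : ℕ)) : ℤ) - 1)) with hf
  have hfnn : ∀ j', 0 ≤ f j' := fun j' =>
    mul_nonneg (pow_nonneg hp0 _ _ _ _) (hw _)
  have step1 : ∑ j : Fin (2 * k - 1),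
      ((Prestrict p k) ^ t) c j * w ((j.val : ℤ) - ((k : ℤ) - 1)) ≤
      ∑ j : Fin (2 * k - 1), f (emb k j) := by
    refine Finset.sum_le_sum fun j _ => ?_
    have harg : (((emb k j).val : ℤ) - ((((k + 1 : ℕ)) : ℤ) - 1)) = (j.val : ℤ) - ((k : ℤ) - 1) := by
      simp [emb]; push_cast; ring
    rw [hf]
    simp only [harg]
    rw [← hec]
    exact mul_le_mul_of_nonneg_right (mono_pow hp0 k t c j) (hw _)
  have himg : ∑ j : Fin (2 * k - 1), f (emb k j) =
      ∑ j' ∈ Finset.univ.image (emb k), f j' :=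
    (Finset.sum_image (fun a _ b _ h => emb_inj k h)).symm
  have hnot : (⟨2 * k, by omega⟩ : Fin (2 * (k + 1) - 1)) ∉ Finset.univ.image (emb k) := by
    intro hmem
    rcases Finset.mem_image.mp hmem with ⟨a, -, ha⟩
    have h2 : a.val + 1 = 2 * k := congrArg Fin.val ha
    have h3 := a.isLt
    omega
  have hflast : f ⟨2 * k, by omega⟩ =
      ((Prestrict p (k + 1)) ^ t) ⟨(k + 1) - 1, by omega⟩ ⟨2 * k, by omega⟩ * w k := by
    simp only [hf, Fin.val_mk]
    congr 2
    omega
  have cstep : (∑ j : Fin (2 * k - 1),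
        ((Prestrict p k) ^ t) c j * w ((j.val : ℤ) - ((k : ℤ) - 1))) +
        ((Prestrict p (k + 1)) ^ t) ⟨(k + 1) - 1, by omega⟩ ⟨2 * k, by omega⟩ * w k
      ≤ (∑ j' ∈ Finset.univ.image (emb k), f j') + f ⟨2 * k, by omega⟩ :=
    add_le_add (himg ▸ step1) (le_of_eq hflast.symm)
  have cstep2 : (∑ j' ∈ Finset.univ.image (emb k), f j') + f ⟨2 * k, by omega⟩ =
      ∑ j' ∈ insert (⟨2 * k, by omega⟩ : Fin (2 * (k + 1) - 1)) (Finset.univ.image (emb k)),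
        f j' :=
    (add_comm _ _).trans (Finset.sum_insert hnot).symm
  have cstep3 : ∑ j' ∈ insert (⟨2 * k, by omega⟩ : Fin (2 * (k + 1) - 1))
        (Finset.univ.image (emb k)), f j' ≤ ∑ j' : Fin (2 * (k + 1) - 1), f j' :=
    Finset.sum_le_sum_of_subset_of_nonneg (Finset.subset_univ _) fun j' _ _ => hfnn j'
  exact le_trans (le_trans cstep (le_of_eq cstep2)) cstep3

end RowPairAux

/-- for each `t`, `⟨[(P^(k))^t]₀, d^(k)⟩ ≤ ⟨[(P^(k+1))^t]₀, d^(k+1)⟩`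
and `⟨[(P^(k))^t]₀, 𝟏⟩ ≤ ⟨[(P^(k+1))^t]₀, 𝟏⟩`, with strict inequality for
`t` large enough. -/
theorem row_pairing_mono
    (p : ℕ → ℝ) (d : ℤ → ℝ) (k : ℕ)
    (hk : 1 ≤ k)
    (hp0 : ∀ n, 0 ≤ p n)
    (hpdec : ∀ n : ℕ, p (n + 1) ≤ p n)
    (hp1 : 0 < p 1)
    (hrow : ∀ i : ℤ, HasSum (fun j : ℤ => p (i - j).natAbs) 1)
    (hd0 : ∀ e, 0 ≤ d e)
    (hdeven : ∀ e : ℤ, d e = d (-e))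
    (hdinc : ∀ e : ℕ, d (e : ℤ) ≤ d ((e : ℤ) + 1))
    (hdzero : d 0 = 0)
    (hdpos : ∀ e : ℤ, e ≠ 0 → 0 < d e) :
    (∀ t : ℕ,
      rowPair p d k t hk ≤ rowPair p d (k + 1) t (by omega) ∧
      rowPair p (fun _ => 1) k t hk ≤ rowPair p (fun _ => 1) (k + 1) t (by omega)) ∧
    (∃ T : ℕ, ∀ t : ℕ, T ≤ t →
      rowPair p d k t hk < rowPair p d (k + 1) t (by omega) ∧
      rowPair p (fun _ => 1) k t hk < rowPair p (fun _ => 1) (k + 1) t (by omega)) := by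
  have hone : ∀ e : ℤ, (0 : ℝ) ≤ (fun _ : ℤ => (1 : ℝ)) e := fun _ => zero_le_one
  have hd' := RowPairAux.rowPair_key (p := p) d k  -- partially applied
  constructor
  · intro t
    have nn : 0 ≤ ((Prestrict p (k + 1)) ^ t) ⟨(k + 1) - 1, by omega⟩ ⟨2 * k, by omega⟩ :=
      RowPairAux.pow_nonneg hp0 (k + 1) t _ _
    constructor
    · exact le_trans
        (le_add_of_nonneg_right (mul_nonneg nn (hd0 _)))
        (RowPairAux.rowPair_key (p := p) d k t hk hp0 hd0)
    · exact le_trans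
        (le_add_of_nonneg_right (mul_nonneg nn zero_le_one))
        (RowPairAux.rowPair_key (p := p) (fun _ => 1) k t hk hp0 hone)
  · refine ⟨k, fun t ht => ?_⟩
    have hpos : 0 < ((Prestrict p (k + 1)) ^ t) ⟨(k + 1) - 1, by omega⟩ ⟨2 * k, by omega⟩ := by
      refine RowPairAux.pow_pos hp0 hpdec hp1 (k + 1) t _ _ ?_
      show ((((k + 1) - 1 : ℕ) : ℤ) - ((2 * k : ℕ) : ℤ)).natAbs ≤ t
      omega
    have hdk : 0 < d k := hdpos k (by omega)
    constructor
    · exact lt_of_lt_of_le (lt_add_of_pos_right _ (mul_pos hpos hdk))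
        (RowPairAux.rowPair_key (p := p) d k t hk hp0 hd0)
    · exact lt_of_lt_of_le (lt_add_of_pos_right _ (mul_pos hpos zero_lt_one))
        (RowPairAux.rowPair_key (p := p) (fun _ => 1) k t hk hp0 hone)
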